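/- Fix k, r, ℓ ∈ ℕ with 2ℓ ≤ r ≤ k. The number of triples (P, Q, σ), where P is a finite partition (Finpartition) of the full set Fin k, Q is a subset of the set of parts of P with |Q| = r, and σ is an involution of Q (a bijection σ : Q → Q with σ² = id) having exactly ℓ two-element orbits, equals Σ_{b=r}^{k} S(k, b)·C(b, r)·C(r, 2ℓ)·(2ℓ−1)!!, where S(k, b) denotes the number of partitions of Fin k into exactly b parts (the Stirling number of the second kind). (Such triples are in bijection with the vertically symmetric partition-algebra diagrams on k vertices of rank r with r − 2ℓ fixed blocks.) -/

import Mathlib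

open Finset

/-- The Stirling number of the second kind `S(k, b)`: the number of partitions
of `Fin k` into exactly `b` parts. -/
noncomputable def stirling2 (k b : ℕ) : ℕ :=
  Nat.card {P : Finpartition (Finset.univ : Finset (Fin k)) // P.parts.card = b}

section Aux
open Equiv Equiv.Perm Nat

lemma sq_eq_one_iff' {α : Type*} (σ : Equiv.Perm α) : σ ^ 2 = 1 ↔ ∀ a, σ (σ a) = a := by
  simp [sq, Equiv.ext_iff]

/-- Fiber equivalence: fpf involutions sending `a` to `b` correspond to fpf involutions on
the complement of `{a, b}`. -/
def fpfFiberEquiv {α : Type*} [DecidableEq α] (a b : α) (hab : b ≠ a) :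
    {σ : {σ : Equiv.Perm α // σ ^ 2 = 1 ∧ ∀ x, σ x ≠ x} // σ.1 a = b} ≃
    {τ : Equiv.Perm {x : α // x ≠ a ∧ x ≠ b} // τ ^ 2 = 1 ∧ ∀ x, τ x ≠ x} where
  toFun := fun ⟨⟨σ, h1, h2⟩, h3⟩ => by
    rw [sq_eq_one_iff'] at h1
    have hba : σ b = a := by rw [← h3, h1]
    have key : ∀ x : α, (x ≠ a ∧ x ≠ b) ↔ (σ x ≠ a ∧ σ x ≠ b) := by
      intro x
      have h4 : σ x = a ↔ x = b := ⟨fun h => by rw [← h1 x, h, h3], fun h => h ▸ hba⟩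
      have h5 : σ x = b ↔ x = a := ⟨fun h => by rw [← h1 x, h, hba], fun h => h ▸ h3⟩
      simp only [ne_eq, h4, h5]; exact and_comm
    refine ⟨σ.subtypePerm (fun x => (key x).symm), ?_, ?_⟩
    · rw [sq_eq_one_iff']; intro x; exact Subtype.ext (h1 x)
    · intro x hx; exact h2 x (congrArg Subtype.val hx)
  invFun := fun ⟨τ, h1, h2⟩ => by
    refine ⟨⟨ofSubtype τ * Equiv.swap a b, ?_, ?_⟩, ?_⟩
    · have hd : (ofSubtype τ).Disjoint (Equiv.swap a b) := by
        intro x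
        by_cases hx : x ≠ a ∧ x ≠ b
        · exact Or.inr (Equiv.swap_apply_of_ne_of_ne hx.1 hx.2)
        · exact Or.inl (ofSubtype_apply_of_not_mem τ hx)
      rw [hd.commute.mul_pow, ← map_pow, h1, map_one, one_mul, sq, Equiv.swap_mul_self]
    · intro x
      rcases eq_or_ne x a with rfl | hxa
      · simp only [Perm.mul_apply, Equiv.swap_apply_left]
        rw [ofSubtype_apply_of_not_mem τ (by simp)]
        exact hab
      rcases eq_or_ne x b with rfl | hxb
      · simp only [Perm.mul_apply, Equiv.swap_apply_right]
        rw [ofSubtype_apply_of_not_mem τ (by simp)]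
        exact hab.symm
      · simp only [Perm.mul_apply, Equiv.swap_apply_of_ne_of_ne hxa hxb]
        rw [ofSubtype_apply_of_mem τ ⟨hxa, hxb⟩]
        intro h
        exact h2 ⟨x, hxa, hxb⟩ (Subtype.ext h)
    · simp only [Perm.mul_apply, Equiv.swap_apply_left]
      exact ofSubtype_apply_of_not_mem τ (by simp)
  left_inv := fun ⟨⟨σ, h1, h2⟩, h3⟩ => by
    have h1' := (sq_eq_one_iff' σ).1 h1
    have hba : σ b = a := by rw [← h3, h1']
    refine Subtype.ext (Subtype.ext (Equiv.ext fun x => ?_))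
    simp only [Perm.mul_apply]
    rcases eq_or_ne x a with rfl | hxa
    · rw [Equiv.swap_apply_left, ofSubtype_apply_of_not_mem _ (by simp), h3]
    rcases eq_or_ne x b with rfl | hxb
    · rw [Equiv.swap_apply_right, ofSubtype_apply_of_not_mem _ (by simp), hba]
    · rw [Equiv.swap_apply_of_ne_of_ne hxa hxb, ofSubtype_apply_of_mem _ ⟨hxa, hxb⟩]
      rfl
  right_inv := fun ⟨τ, h1, h2⟩ => by
    refine Subtype.ext (Equiv.ext fun x => Subtype.ext ?_)
    obtain ⟨x, hxa, hxb⟩ := x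
    show (ofSubtype τ * Equiv.swap a b) x = _
    rw [Perm.mul_apply, Equiv.swap_apply_of_ne_of_ne hxa hxb, ofSubtype_apply_of_mem τ ⟨hxa, hxb⟩]

lemma card_fpfInv : ∀ (ℓ : ℕ) (α : Type) [Fintype α] [DecidableEq α],
    Fintype.card α = 2 * ℓ →
    Nat.card {σ : Equiv.Perm α // σ ^ 2 = 1 ∧ ∀ a, σ a ≠ a} = (2 * ℓ - 1)‼ := by
  intro ℓ
  induction ℓ with
  | zero =>
    intro α _ _ h
    have : IsEmpty α := Fintype.card_eq_zero_iff.1 (by simpa using h)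
    have : Unique {σ : Equiv.Perm α // σ ^ 2 = 1 ∧ ∀ a, σ a ≠ a} :=
      { default := ⟨1, one_pow 2, fun a => isEmptyElim a⟩
        uniq := fun σ => Subtype.ext (Subsingleton.elim _ _) }
    rw [Nat.card_unique]; rfl
  | succ n ih =>
    intro α _ _ h
    have hne : Nonempty α := Fintype.card_pos_iff.1 (by omega)
    obtain ⟨a⟩ := hne
    rw [Nat.card_eq_fintype_card]
    have key : ∀ b ∈ univ.erase a,
        (univ.filter fun σ : {σ : Equiv.Perm α // σ ^ 2 = 1 ∧ ∀ x, σ x ≠ x} => σ.1 a = b).card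
          = (2 * n - 1)‼ := by
      intro b hb
      have hba : b ≠ a := (Finset.mem_erase.1 hb).1
      rw [← Fintype.card_subtype, Fintype.card_congr (fpfFiberEquiv a b hba),
        ← Nat.card_eq_fintype_card]
      refine ih _ ?_
      have hsub : Fintype.card {x : α // x ≠ a ∧ x ≠ b} = Fintype.card α - 2 := by
        rw [Fintype.card_subtype]
        have : (univ.filter fun x : α => x ≠ a ∧ x ≠ b) = univ \ {a, b} := by
          ext x; simp [not_or]
        rw [this, Finset.card_sdiff]
        simp [Finset.card_insert_of_notMem, hba.symm]
      omega
    calc Fintype.card {σ : Equiv.Perm α // σ ^ 2 = 1 ∧ ∀ x, σ x ≠ x}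
        = ∑ b ∈ univ.erase a,
            (univ.filter fun σ : {σ : Equiv.Perm α // σ ^ 2 = 1 ∧ ∀ x, σ x ≠ x} =>
              σ.1 a = b).card := by
          rw [← Finset.card_univ]
          exact Finset.card_eq_sum_card_fiberwise fun σ _ =>
            Finset.mem_erase.2 ⟨σ.2.2 a, Finset.mem_univ _⟩
      _ = (2 * n + 1) * (2 * n - 1)‼ := by
          rw [Finset.sum_congr rfl key, Finset.sum_const, Finset.card_erase_of_mem (mem_univ a),
            Finset.card_univ, h, smul_eq_mul]
          have h2 : 2 * (n + 1) - 1 = 2 * n + 1 := by omega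
          rw [h2]
      _ = (2 * (n + 1) - 1)‼ := by
          cases n with
          | zero => decide
          | succ m =>
            have h1 : 2 * (m + 1 + 1) - 1 = (2 * (m + 1) - 1) + 2 := by omega
            have h2 : 2 * (m + 1) + 1 = (2 * (m + 1) - 1) + 2 := by omega
            rw [h1, h2, Nat.doubleFactorial_add_two]

/-- Involutions with prescribed moved set `s` correspond to fpf involutions on `s`. -/
def movedSetEquiv {β : Type*} [Fintype β] [DecidableEq β] (s : Finset β) :
    {σ : Equiv.Perm β // σ ^ 2 = 1 ∧ (univ.filter fun a => σ a ≠ a) = s} ≃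
    {τ : Equiv.Perm {x : β // x ∈ s} // τ ^ 2 = 1 ∧ ∀ x, τ x ≠ x} where
  toFun := fun ⟨σ, h1, h2⟩ => by
    rw [sq_eq_one_iff'] at h1
    have hmem : ∀ x : β, x ∈ s ↔ σ x ≠ x := by
      intro x; rw [← h2, Finset.mem_filter]; simp
    have key : ∀ x : β, x ∈ s ↔ σ x ∈ s := by
      intro x
      rw [hmem, hmem (σ x), h1 x]
      exact ⟨fun h => fun h' => h h'.symm, fun h => fun h' => h h'.symm⟩
    refine ⟨σ.subtypePerm (fun x => (key x).symm), ?_, ?_⟩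
    · rw [sq_eq_one_iff']; intro x; exact Subtype.ext (h1 x)
    · rintro ⟨x, hx⟩ hc
      exact (hmem x).1 hx (congrArg Subtype.val hc)
  invFun := fun ⟨τ, h1, h2⟩ => by
    refine ⟨ofSubtype τ, by rw [← map_pow, h1, map_one], ?_⟩
    ext x
    simp only [Finset.mem_filter, Finset.mem_univ, true_and]
    by_cases hx : x ∈ s
    · rw [ofSubtype_apply_of_mem τ hx]
      simp only [hx, iff_true]
      intro h
      exact h2 ⟨x, hx⟩ (Subtype.ext h)
    · rw [ofSubtype_apply_of_not_mem τ hx]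
      simp [hx]
  left_inv := fun ⟨σ, h1, h2⟩ => by
    refine Subtype.ext ?_
    show ofSubtype _ = σ
    refine ofSubtype_subtypePerm _ fun x hx => ?_
    rw [← h2, Finset.mem_filter]
    exact ⟨Finset.mem_univ x, hx⟩
  right_inv := fun ⟨τ, h1, h2⟩ => by
    refine Subtype.ext (Equiv.ext fun x => Subtype.ext ?_)
    show (ofSubtype τ) x.1 = _
    rw [ofSubtype_apply_of_mem τ x.2]

/-- The number of involutions with exactly `2ℓ` moved points. -/
lemma card_inv_moved (β : Type) [Fintype β] [DecidableEq β] (ℓ : ℕ) :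
    Nat.card {σ : Equiv.Perm β //
        σ ^ 2 = 1 ∧ (univ.filter fun a => σ a ≠ a).card = 2 * ℓ}
      = (Fintype.card β).choose (2 * ℓ) * (2 * ℓ - 1)‼ := by
  rw [Nat.card_eq_fintype_card, Fintype.card_subtype]
  have key : ∀ s ∈ univ.powersetCard (2 * ℓ),
      ((univ.filter fun σ : Equiv.Perm β =>
          σ ^ 2 = 1 ∧ (univ.filter fun a => σ a ≠ a).card = 2 * ℓ).filter
        (fun σ => (univ.filter fun a => σ a ≠ a) = s)).card = (2 * ℓ - 1)‼ := by
    intro s hs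
    have hcard : s.card = 2 * ℓ := (Finset.mem_powersetCard_univ.1 hs)
    have hiff : ∀ σ : Equiv.Perm β,
        ((σ ^ 2 = 1 ∧ (univ.filter fun a => σ a ≠ a).card = 2 * ℓ) ∧
          (univ.filter fun a => σ a ≠ a) = s) ↔
        (σ ^ 2 = 1 ∧ (univ.filter fun a => σ a ≠ a) = s) := by
      intro σ
      constructor
      · rintro ⟨⟨h1, _⟩, h3⟩; exact ⟨h1, h3⟩
      · rintro ⟨h1, h3⟩; exact ⟨⟨h1, by rw [h3, hcard]⟩, h3⟩
    rw [Finset.filter_filter]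
    rw [Finset.filter_congr fun σ _ => hiff σ]
    rw [← Fintype.card_subtype, Fintype.card_congr (movedSetEquiv s),
      ← Nat.card_eq_fintype_card, card_fpfInv ℓ _ (by rw [Fintype.card_coe, hcard])]
  calc (univ.filter fun σ : Equiv.Perm β =>
          σ ^ 2 = 1 ∧ (univ.filter fun a => σ a ≠ a).card = 2 * ℓ).card
      = ∑ s ∈ univ.powersetCard (2 * ℓ),
          ((univ.filter fun σ : Equiv.Perm β =>
            σ ^ 2 = 1 ∧ (univ.filter fun a => σ a ≠ a).card = 2 * ℓ).filter
            (fun σ => (univ.filter fun a => σ a ≠ a) = s)).card :=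
        Finset.card_eq_sum_card_fiberwise fun σ hσ =>
          Finset.mem_powersetCard_univ.2 (Finset.mem_filter.1 hσ).2.2
    _ = (Fintype.card β).choose (2 * ℓ) * (2 * ℓ - 1)‼ := by
        rw [Finset.sum_congr rfl key, Finset.sum_const, smul_eq_mul,
          Finset.card_powersetCard, Finset.card_univ]

end Aux

open Nat

/-- The number of triples `(P, Q, σ)`, where `P` is a partition of `Fin k`,
`Q` is an `r`-element subset of the parts of `P`, and `σ` is an involution of
`Q` with exactly `ℓ` two-element orbits (equivalently, for an involution,
exactly `2ℓ` non-fixed elements), equals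
`Σ_{b=r}^{k} S(k,b)·C(b,r)·C(r,2ℓ)·(2ℓ−1)!!`.  These triples are in bijection
with the vertically symmetric partition-algebra diagrams on `k` vertices of
rank `r` with `r − 2ℓ` fixed blocks. -/
theorem symmetric_partition_diagram_count (k r ℓ : ℕ)
    (hℓ : 2 * ℓ ≤ r) (hr : r ≤ k) :
    Nat.card
      ((P : Finpartition (Finset.univ : Finset (Fin k))) ×
        (Q : {Q : Finset (Finset (Fin k)) // Q ⊆ P.parts ∧ Q.card = r}) ×
        {σ : Equiv.Perm {A // A ∈ Q.1} //
          σ ^ 2 = 1 ∧ (Finset.univ.filter fun A => σ A ≠ A).card = 2 * ℓ})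
    = ∑ b ∈ Finset.Icc r k,
        stirling2 k b * Nat.choose b r * Nat.choose r (2 * ℓ) *
          Nat.doubleFactorial (2 * ℓ - 1) := by
  classical
  rw [Nat.card_eq_fintype_card, Fintype.card_sigma]
  have inner : ∀ (P : Finpartition (Finset.univ : Finset (Fin k)))
      (Q : {Q : Finset (Finset (Fin k)) // Q ⊆ P.parts ∧ Q.card = r}),
      Fintype.card {σ : Equiv.Perm {A // A ∈ Q.1} //
          σ ^ 2 = 1 ∧ (Finset.univ.filter fun A => σ A ≠ A).card = 2 * ℓ}
        = r.choose (2 * ℓ) * (2 * ℓ - 1)‼ := by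
    intro P Q
    rw [← Nat.card_eq_fintype_card, card_inv_moved, Fintype.card_coe, Q.2.2]
  have step1 : ∀ P : Finpartition (Finset.univ : Finset (Fin k)),
      Fintype.card ((Q : {Q : Finset (Finset (Fin k)) // Q ⊆ P.parts ∧ Q.card = r}) ×
        {σ : Equiv.Perm {A // A ∈ Q.1} //
          σ ^ 2 = 1 ∧ (Finset.univ.filter fun A => σ A ≠ A).card = 2 * ℓ})
      = P.parts.card.choose r * (r.choose (2 * ℓ) * (2 * ℓ - 1)‼) := by
    intro P
    rw [Fintype.card_sigma]
    rw [Finset.sum_congr rfl fun Q _ => inner P Q, Finset.sum_const, smul_eq_mul,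
      Finset.card_univ]
    congr 1
    rw [Fintype.card_subtype]
    have : (univ.filter fun Q : Finset (Finset (Fin k)) => Q ⊆ P.parts ∧ Q.card = r)
        = P.parts.powersetCard r := by
      ext Q; simp [Finset.mem_powersetCard]
    rw [this, Finset.card_powersetCard]
  rw [Finset.sum_congr rfl fun P _ => step1 P]
  have hmaps : ∀ P : Finpartition (Finset.univ : Finset (Fin k)),
      P ∈ univ → P.parts.card ∈ Finset.Icc 0 k := by
    intro P _
    simp only [Finset.mem_Icc]
    exact ⟨Nat.zero_le _, le_trans P.card_parts_le_card (by simp)⟩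
  rw [← Finset.sum_fiberwise_of_maps_to hmaps]
  have hstir : ∀ b, stirling2 k b
      = (univ.filter fun P : Finpartition (Finset.univ : Finset (Fin k)) =>
          P.parts.card = b).card := by
    intro b
    rw [stirling2, Nat.card_eq_fintype_card, Fintype.card_subtype]
  have step2 : ∀ b ∈ Finset.Icc 0 k,
      (∑ P ∈ univ.filter fun P : Finpartition (Finset.univ : Finset (Fin k)) =>
          P.parts.card = b, P.parts.card.choose r * (r.choose (2 * ℓ) * (2 * ℓ - 1)‼))
      = stirling2 k b * Nat.choose b r * Nat.choose r (2 * ℓ) * (2 * ℓ - 1)‼ := by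
    intro b _
    rw [Finset.sum_congr rfl fun P hP => by
      rw [(Finset.mem_filter.1 hP).2]]
    rw [Finset.sum_const, smul_eq_mul, ← hstir b]
    ring
  rw [Finset.sum_congr rfl step2]
  symm
  refine Finset.sum_subset ?_ ?_
  · intro b hb
    simp only [Finset.mem_Icc] at hb ⊢
    omega
  · intro b hb hb'
    simp only [Finset.mem_Icc] at hb hb'
    have : b < r := by omega
    rw [Nat.choose_eq_zero_of_lt this]
    ring
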